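/- Let α be an irrational real number with 0 < α < 1 and let γ ∈ ⟨ψ₁,ψ₃⟩ be a morphism that fixes the characteristic word c_α and whose word γ(0) ends in the letter 0. Let u be the word γ(0) with its last letter removed, and suppose Ψ is a morphism satisfying the conjugation relations γ(0)·u = u·Ψ(0) and γ(1)·u = u·Ψ(1). Then Ψ fixes the Sturmian word s_{α,0}. -/

import Mathlib

/-- A morphism of the free monoid `{0,1}*`, determined by the images of the two
letters (`false` encodes the letter 0, `true` encodes the letter 1). -/
abbrev Morph := Bool → List Bool

/-- The identity morphism. -/
def idm : Morph := fun a => [a]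

/-- Composition of morphisms: `(M σ τ)(a) = σ(τ(a))`. -/
def M (σ τ : Morph) : Morph := fun a => (τ a).flatMap σ

/-- `compAll g [i₁, …, iₙ] = g i₁ ∘ g i₂ ∘ ⋯ ∘ g iₙ` (the identity for `n = 0`). -/
def compAll (g : Bool → Morph) (l : List Bool) : Morph :=
  l.foldr (fun i acc => M (g i) acc) idm

/-- Iterated composition of a morphism with itself. -/
def mpow (σ : Morph) : ℕ → Morph
  | 0 => idm
  | k + 1 => M σ (mpow σ k)

/-- The length-`n` prefix of an infinite word. -/
def wpref (w : ℕ → Bool) (n : ℕ) : List Bool := (List.range n).map w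

/-- `σ` fixes the infinite word `w`: for every `n`, the finite word
`σ(w(0))σ(w(1))⋯σ(w(n-1))` is a prefix of `w`. -/
def Fixes (σ : Morph) (w : ℕ → Bool) : Prop :=
  ∀ n : ℕ, (wpref w n).flatMap σ = wpref w ((wpref w n).flatMap σ).length

/-- The integer value `⌊(n+1)α + ρ⌋ - ⌊nα + ρ⌋` of the Sturmian word `s_{α,ρ}`. -/
noncomputable def sfl (α ρ : ℝ) (n : ℕ) : ℤ :=
  ⌊((n : ℝ) + 1) * α + ρ⌋ - ⌊(n : ℝ) * α + ρ⌋

/-- The integer value `⌈(n+1)α + ρ⌉ - ⌈nα + ρ⌉` of the Sturmian word `s'_{α,ρ}`. -/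
noncomputable def scl (α ρ : ℝ) (n : ℕ) : ℤ :=
  ⌈((n : ℝ) + 1) * α + ρ⌉ - ⌈(n : ℝ) * α + ρ⌉

/-- The Sturmian word `s_{α,ρ}` as an infinite binary word. -/
noncomputable def sw (α ρ : ℝ) : ℕ → Bool := fun n => decide (sfl α ρ n = 1)

/-- The Sturmian word `s'_{α,ρ}` as an infinite binary word. -/
noncomputable def sw' (α ρ : ℝ) : ℕ → Bool := fun n => decide (scl α ρ n = 1)

/-- The characteristic word `c_α = s_{α,α}`. -/
noncomputable def cw (α : ℝ) : ℕ → Bool := sw α α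

/-- `ψ₁ : 0 → 01, 1 → 0` (the Fibonacci morphism, `φ₁`). -/
def psi1 : Morph := fun a => match a with | false => [false, true] | true => [false]

/-- `ψ₃ : 0 → 0, 1 → 01` (the morphism `G`, i.e. `φ₀`). -/
def psi3 : Morph := fun a => match a with | false => [false] | true => [false, true]

/-- `ψ₄ : 0 → 0, 1 → 10`. -/
def psi4 : Morph := fun a => match a with | false => [false] | true => [true, false]

/-- `ψ₇ : 0 → 10, 1 → 1`. -/
def psi7 : Morph := fun a => match a with | false => [true, false] | true => [true]

/-- `ψ₈ : 0 → 01, 1 → 1`. -/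
def psi8 : Morph := fun a => match a with | false => [false, true] | true => [true]

/-- Time reversal of a morphism. -/
def trev (σ : Morph) : Morph := fun a => (σ a).reverse

/-- The exchange morphism `E : 0 → 1, 1 → 0`. -/
def Em : Morph := fun a => [!a]

/-- Generators `φ₀, φ₁` indexed by a bit: `false ↦ φ₀ (= ψ₃)`, `true ↦ φ₁ (= ψ₁)`. -/
def phiGen : Bool → Morph := fun b => match b with | false => psi3 | true => psi1

/-- Generators of `⟨ψ₁, ψ₃⟩`: `false` encodes the index 1 (`ψ₁`),
`true` encodes the index 3 (`ψ₃`). -/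
def g13 : Bool → Morph := fun b => match b with | false => psi1 | true => psi3

/-- Generators of `⟨ψ₃, ψ₈⟩`: `false ↦ ψ₃`, `true ↦ ψ₈`. -/
def g38 : Bool → Morph := fun b => match b with | false => psi3 | true => psi8

/-- Generators of `⟨ψ₄, ψ₇⟩`: `false ↦ ψ₄`, `true ↦ ψ₇`. -/
def g47 : Bool → Morph := fun b => match b with | false => psi4 | true => psi7

/-- The Kepler matrices `K₀ = [[1,0],[1,1]]` and `K₁ = [[0,1],[1,1]]`. -/
def K : Bool → Matrix (Fin 2) (Fin 2) ℕ
  | false => !![1, 0; 1, 1]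
  | true => !![0, 1; 1, 1]

/-! ### Auxiliary lemmas -/

lemma wpref_length (w : ℕ → Bool) (n : ℕ) : (wpref w n).length = n := by
  simp [wpref]

lemma wpref_take (w : ℕ → Bool) {n m : ℕ} (h : n ≤ m) :
    (wpref w m).take n = wpref w n := by
  simp only [wpref, ← List.map_take, List.take_range]
  rw [min_eq_left h]

lemma prefix_wpref_eq {w : ℕ → Bool} {x : List Bool} {m : ℕ}
    (h : x <+: wpref w m) : x = wpref w x.length := by
  have hlen : x.length ≤ m := by
    have := h.length_le
    simpa [wpref_length] using this
  rw [List.prefix_iff_eq_take] at h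
  nth_rewrite 1 [h]
  rw [wpref_take w hlen]

lemma wpref_add (w : ℕ → Bool) (n k : ℕ) :
    wpref w (n + k) = wpref w n ++ (List.range k).map (fun i => w (n + i)) := by
  simp [wpref, List.range_add, List.map_map, Function.comp]

lemma compAll_g13_ne_nil (l : List Bool) (a : Bool) : compAll g13 l a ≠ [] := by
  induction l generalizing a with
  | nil => simp [compAll, idm]
  | cons i t ih =>
    simp only [compAll, List.foldr_cons, M]
    intro h
    rw [List.flatMap_eq_nil_iff] at h
    have hne : compAll g13 t a ≠ [] := ih a
    obtain ⟨b, hb⟩ := List.exists_mem_of_ne_nil _ hne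
    have := h b hb
    cases i <;> cases b <;> simp [g13, psi1, psi3] at this

/-! ### Main theorem -/

theorem conjugate_fixes_s_alpha_zero (α : ℝ) (hirr : Irrational α)
    (h0 : 0 < α) (h1 : α < 1)
    (γ : Morph) (hmem : ∃ l : List Bool, γ = compAll g13 l)
    (hfix : Fixes γ (cw α)) (hlast : (γ false).getLast? = some false)
    (Ψ : Morph)
    (hconj : ∀ a : Bool, γ a ++ (γ false).dropLast = (γ false).dropLast ++ Ψ a) :
    Fixes Ψ (sw α 0) := by
  set u : List Bool := (γ false).dropLast with hu
  set c : ℕ → Bool := cw α with hc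
  set s : ℕ → Bool := sw α 0 with hs
  -- γ images are nonempty
  have gne : ∀ a, γ a ≠ [] := by
    obtain ⟨l, rfl⟩ := hmem
    exact compAll_g13_ne_nil l
  -- γ(0) = u ++ [0]
  have hγ0 : γ false = u ++ [false] := by
    have hne : γ false ≠ [] := gne false
    have h := List.getLast?_eq_getLast hne
    rw [h] at hlast
    have heq : (γ false).getLast hne = false := by injection hlast
    have h2 := List.dropLast_append_getLast hne
    rw [heq] at h2
    rw [hu]
    exact h2.symm
  -- conjugation for words
  have conjw : ∀ v : List Bool, v.flatMap γ ++ u = u ++ v.flatMap Ψ := by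
    intro v
    induction v with
    | nil => simp
    | cons a t ih =>
      calc (a :: t).flatMap γ ++ u = γ a ++ (t.flatMap γ ++ u) := by
            simp [List.flatMap_cons]
        _ = γ a ++ (u ++ t.flatMap Ψ) := by rw [ih]
        _ = (γ a ++ u) ++ t.flatMap Ψ := by rw [List.append_assoc]
        _ = (u ++ Ψ a) ++ t.flatMap Ψ := by rw [hconj a]
        _ = u ++ (a :: t).flatMap Ψ := by simp [List.flatMap_cons]
  -- images under γ are at least as long
  have lenle : ∀ v : List Bool, v.length ≤ (v.flatMap γ).length := by
    intro v
    induction v with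
    | nil => simp
    | cons a t ih =>
      have h1 : 0 < (γ a).length := List.length_pos_iff.mpr (gne a)
      simp only [List.flatMap_cons, List.length_append, List.length_cons]
      omega
  -- basic facts about s and c
  have hfl : ⌊α⌋ = 0 := Int.floor_eq_zero_iff.mpr ⟨le_of_lt h0, h1⟩
  have s0 : s 0 = false := by
    have : sfl α 0 0 = 0 := by
      simp [sfl, hfl]
    simp [hs, sw, this]
  have ssucc : ∀ n : ℕ, s (n + 1) = c n := by
    intro n
    have harg : sfl α 0 (n + 1) = sfl α α n := by
      unfold sfl
      congr 2 <;> push_cast <;> ring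
    simp [hs, hc, sw, cw, harg]
  have wpref_s : ∀ n : ℕ, wpref s (n + 1) = false :: wpref c n := by
    intro n
    simp only [wpref, List.range_succ_eq_map, List.map_cons, List.map_map]
    rw [s0]
    congr 1
    apply List.map_congr_left
    intro i _
    simp [Function.comp, Nat.succ_eq_add_one, ssucc i]
  -- Lemma B : γ(c-prefix) ++ u is a prefix of c
  have lemB : ∀ n : ℕ, (wpref c n).flatMap γ ++ u
      = wpref c (((wpref c n).flatMap γ).length + u.length) := by
    intro n
    set k := u.length with hk
    set seg : List Bool := (List.range k).map (fun i => c (n + i)) with hseg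
    set A : List Bool := (wpref c n).flatMap γ with hA
    set B : List Bool := seg.flatMap γ with hB
    have hsplit : (wpref c (n + k)).flatMap γ = A ++ B := by
      rw [wpref_add c n k, List.flatMap_append]
    have hfix1 : A = wpref c A.length := hfix n
    have hfix2 : A ++ B = wpref c (A.length + B.length) := by
      have := hfix (n + k)
      rw [hsplit] at this
      simpa [List.length_append] using this
    have hkB : k ≤ B.length := by
      have h1 : seg.length = k := by simp [hseg]
      have h2 := lenle seg
      rw [← hB] at h2
      omega
    have hupref : u <+: B := by
      have h1 : u <+: B ++ u := ⟨seg.flatMap Ψ, (conjw seg).symm⟩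
      have h2 : B <+: B ++ u := List.prefix_append B u
      exact List.prefix_of_prefix_length_le h1 h2 (by omega)
    have h3 : A ++ u <+: wpref c (A.length + B.length) := by
      rw [← hfix2]
      exact ⟨hupref.choose, by rw [List.append_assoc, hupref.choose_spec]⟩
    have h4 := prefix_wpref_eq h3
    rw [h4]
    congr 1
    simp [List.length_append, hk]
  -- main induction-free computation
  intro n
  cases n with
  | zero => simp [wpref]
  | succ m =>
    rw [wpref_s m]
    set L : ℕ := ((wpref c m).flatMap γ).length with hL
    have key : u ++ (false :: wpref c m).flatMap Ψ
        = u ++ wpref s (L + u.length + 1) := by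
      rw [← conjw (false :: wpref c m)]
      calc (false :: wpref c m).flatMap γ ++ u
          = γ false ++ ((wpref c m).flatMap γ ++ u) := by
            simp [List.flatMap_cons]
        _ = γ false ++ wpref c (L + u.length) := by rw [lemB m]
        _ = u ++ (false :: wpref c (L + u.length)) := by
            rw [hγ0]; simp
        _ = u ++ wpref s (L + u.length + 1) := by rw [← wpref_s (L + u.length)]
    have heq := List.append_cancel_left key
    rw [heq, wpref_length]
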